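/- The function m(θ) = θ/2 - 1/2 + (θ/2)√(1 - 2/θ) + log(1/2 - (1/2)√(1 - 2/θ)) is strictly increasing on [2, ∞). -/

import Mathlib

noncomputable def m (θ : ℝ) : ℝ :=
  θ / 2 - 1 / 2 + θ / 2 * Real.sqrt (1 - 2 / θ) +
    Real.log (1 / 2 - 1 / 2 * Real.sqrt (1 - 2 / θ))

lemma m_eq (θ : ℝ) (hθ : 2 ≤ θ) :
    m θ = 1 / (1 - Real.sqrt (1 - 2 / θ)) + Real.log (1 - Real.sqrt (1 - 2 / θ))
      - 1 / 2 - Real.log 2 := by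
  have hθ0 : 0 < θ := by linarith
  set s := Real.sqrt (1 - 2 / θ) with hs
  have h1 : 0 ≤ 1 - 2 / θ := by
    have : 2 / θ ≤ 1 := by rw [div_le_one hθ0]; linarith
    linarith
  have hs0 : 0 ≤ s := Real.sqrt_nonneg _
  have hs2 : s ^ 2 = 1 - 2 / θ := Real.sq_sqrt h1
  have hslt : s < 1 := by
    nlinarith [div_pos (by norm_num : (0:ℝ) < 2) hθ0]
  have hne : (1 : ℝ) - s ≠ 0 := by linarith
  have hA : θ / 2 - 1 / 2 + θ / 2 * s = 1 / (1 - s) - 1 / 2 := by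
    have key : θ * (1 - s ^ 2) = 2 := by
      rw [hs2]; field_simp; ring
    field_simp
    nlinarith [key]
  have hB : Real.log (1 / 2 - 1 / 2 * s) = Real.log (1 - s) - Real.log 2 := by
    have : (1 / 2 - 1 / 2 * s : ℝ) = (1 - s) / 2 := by ring
    rw [this, Real.log_div hne (by norm_num)]
  rw [m, hA, hB]; ring

lemma g_lt {a b : ℝ} (ha : 0 < a) (hab : a < b) (hb : b ≤ 1) :
    1 / b + Real.log b < 1 / a + Real.log a := by
  have hb0 : 0 < b := lt_trans ha hab
  have hr : Real.log (b / a) < b / a - 1 :=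
    Real.log_lt_sub_one_of_pos (div_pos hb0 ha) (by
      intro h
      have : b = a := by field_simp at h; linarith
      linarith)
  have hlog : Real.log (b / a) = Real.log b - Real.log a := Real.log_div (ne_of_gt hb0) (ne_of_gt ha)
  have h2 : b / a - 1 ≤ 1 / a - 1 / b := by
    have key : (1 / a - 1 / b) - (b / a - 1) = (b - a) * (1 - b) / (a * b) := by
      field_simp
    have hnn : 0 ≤ (b - a) * (1 - b) / (a * b) :=
      div_nonneg (mul_nonneg (by linarith) (by linarith)) (le_of_lt (mul_pos ha hb0))
    linarith
  rw [hlog] at hr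
  linarith

theorem m_strictMonoOn : StrictMonoOn m (Set.Ici (2 : ℝ)) := by
  intro a ha b hb hab
  simp only [Set.mem_Ici] at ha hb
  rw [m_eq a ha, m_eq b hb]
  set sa := Real.sqrt (1 - 2 / a) with hsa
  set sb := Real.sqrt (1 - 2 / b) with hsb
  have ha0 : (0:ℝ) < a := by linarith
  have hb0 : (0:ℝ) < b := by linarith
  have h1a : 0 ≤ 1 - 2 / a := by
    have : 2 / a ≤ 1 := by rw [div_le_one ha0]; linarith
    linarith
  have h1b : 0 ≤ 1 - 2 / b := by
    have : 2 / b ≤ 1 := by rw [div_le_one hb0]; linarith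
    linarith
  have hsalt : sa < sb := by
    apply Real.sqrt_lt_sqrt h1a
    have : 2 / b < 2 / a := by
      apply div_lt_div_of_pos_left (by norm_num) ha0 hab
    linarith
  have hsb2 : sb ^ 2 = 1 - 2 / b := Real.sq_sqrt h1b
  have hsblt : sb < 1 := by
    nlinarith [div_pos (by norm_num : (0:ℝ) < 2) hb0]
  have hsa0 : 0 ≤ sa := Real.sqrt_nonneg _
  have := g_lt (a := 1 - sb) (b := 1 - sa) (by linarith) (by linarith) (by linarith)
  linarith
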